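/- arXiv:0901.4079 — 6 statements merged into one kernel-verified Lean document; each statement's English description precedes it below -/
import Mathlib

section
/- Let N ≥ 2 and let F = RatFunc ℂ be the field of rational functions in one variable u over ℂ. Define C ∈ F[X] by C(X) = X^N + Σ_{s=1}^{⌊N/2⌋} (-1)^s · (N/(N-s)) · binom(N-s, s) · u^s · X^{N-2s}. Then the Galois group of C over F is cyclic of order 2 (isomorphic to ℤ/2ℤ). -/
open Polynomial

namespace Stmt7Aux

lemma no_sqrt_X (f : RatFunc ℂ) : f ^ 2 ≠ RatFunc.X := by
  intro h
  have hf : f ≠ 0 := by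
    rintro rfl
    exact RatFunc.X_ne_zero (by simpa using h.symm)
  have h2 := congrArg RatFunc.intDegree h
  rw [pow_two, RatFunc.intDegree_mul hf hf, RatFunc.intDegree_X] at h2
  omega

noncomputable section
abbrev F := RatFunc ℂ

lemma qirr : Irreducible (X ^ 2 - C (RatFunc.X : F)) :=
  X_pow_sub_C_irreducible_of_prime Nat.prime_two fun b => no_sqrt_X b

instance : Fact (Irreducible (X ^ 2 - C (RatFunc.X : F))) := ⟨qirr⟩

abbrev K := AdjoinRoot (X ^ 2 - C (RatFunc.X : F))

example : Field K := inferInstance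

lemma hq0 : (X ^ 2 - C (RatFunc.X : F)) ≠ 0 := qirr.ne_zero

lemma finrankK : Module.finrank F K = 2 := by
  have := (AdjoinRoot.powerBasis hq0).finrank
  rwa [AdjoinRoot.powerBasis_dim, natDegree_X_pow_sub_C] at this

lemma hv2 : (AdjoinRoot.root (X ^ 2 - C (RatFunc.X : F))) ^ 2
    = algebraMap F K RatFunc.X := by
  have h := AdjoinRoot.eval₂_root (X ^ 2 - C (RatFunc.X : F))
  simp only [eval₂_sub, eval₂_pow, eval₂_X, eval₂_C, sub_eq_zero] at h
  rw [h, AdjoinRoot.algebraMap_eq]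

lemma hvne : (AdjoinRoot.root (X ^ 2 - C (RatFunc.X : F))) ≠ 0 := by
  intro h
  have := hv2
  rw [h] at this
  simp only [zero_pow, ne_eq, OfNat.ofNat_ne_zero, not_false_eq_true] at this
  exact RatFunc.X_ne_zero ((algebraMap F K).injective (by simpa using this.symm))

variable (N : ℕ)

abbrev dd (N : ℕ) : Polynomial ℂ := X ^ N + ∑ s ∈ Finset.Icc 1 (N / 2),
    C ((-1 : ℂ) ^ s * ((N : ℂ) / ((N : ℂ) - (s : ℂ))) * (Nat.choose (N - s) s : ℂ)) *
      X ^ (N - 2 * s)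

abbrev PP (N : ℕ) : Polynomial F := X ^ N + ∑ s ∈ Finset.Icc 1 (N / 2),
    C ((-1 : F) ^ s * ((N : F) / ((N : F) - (s : F))) * (Nat.choose (N - s) s : F) *
        (RatFunc.X : F) ^ s) * X ^ (N - 2 * s)

abbrev φ : F →+* K := algebraMap F K
abbrev ψ : ℂ →+* K := (algebraMap F K).comp (algebraMap ℂ F)
abbrev vv : K := AdjoinRoot.root (X ^ 2 - C (RatFunc.X : F))

lemma key (hN : 2 ≤ N) : (PP N).map φ =
    C (vv ^ N) * ((dd N).map ψ).comp (C vv⁻¹ * X) := by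
  simp only [Polynomial.map_add, Polynomial.map_pow, Polynomial.map_sum, Polynomial.map_mul,
    map_X, map_C, add_comp, sum_comp, mul_comp, pow_comp, C_comp, X_comp,
    mul_pow, ← C_pow, mul_add, Finset.mul_sum, ← mul_assoc, ← C_mul]
  congr 1
  · rw [← mul_pow, mul_inv_cancel₀ hvne, one_pow, map_one, one_mul]
  · refine Finset.sum_congr rfl fun s hs => ?_
    obtain ⟨hs1, hs2⟩ := Finset.mem_Icc.mp hs
    have h2s : 2 * s ≤ N := by omega
    congr 1
    have hval : vv ^ N * vv⁻¹ ^ (N - 2 * s) = (algebraMap F K RatFunc.X) ^ s := by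
      have h1 : vv ^ N = vv ^ (2 * s) * vv ^ (N - 2 * s) := by
        rw [← pow_add]; congr 1; omega
      calc vv ^ N * vv⁻¹ ^ (N - 2 * s)
          = vv ^ (2 * s) * (vv * vv⁻¹) ^ (N - 2 * s) := by rw [mul_pow, h1]; ring
        _ = (algebraMap F K RatFunc.X) ^ s := by
            rw [mul_inv_cancel₀ hvne, one_pow, mul_one, pow_mul, hv2]
    rw [C_inj]
    simp only [map_mul, map_pow, map_div₀, map_natCast, map_neg, map_one, map_sub]
    rw [← hval]
    ring

lemma sum_deg_lt (R : Type*) [Field R] (c : ℕ → R) (hN : 2 ≤ N) :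
    (∑ s ∈ Finset.Icc 1 (N / 2), C (c s) * X ^ (N - 2 * s)).degree < (N : WithBot ℕ) := by
  apply lt_of_le_of_lt (degree_sum_le _ _)
  rw [Finset.sup_lt_iff (by exact_mod_cast WithBot.bot_lt_coe N)]
  intro s hs
  obtain ⟨hs1, hs2⟩ := Finset.mem_Icc.mp hs
  calc (C (c s) * X ^ (N - 2 * s)).degree
      ≤ (C (c s)).degree + (X ^ (N - 2 * s) : Polynomial R).degree := degree_mul_le _ _
    _ ≤ 0 + (X ^ (N - 2 * s) : Polynomial R).degree := by
        exact add_le_add degree_C_le le_rfl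
    _ = ((N - 2 * s : ℕ) : WithBot ℕ) := by rw [zero_add, degree_X_pow]
    _ < (N : WithBot ℕ) := by exact_mod_cast (show N - 2 * s < N by omega)

lemma PP_monic (hN : 2 ≤ N) : (PP N).Monic :=
  monic_X_pow_add (sum_deg_lt N F _ hN)

lemma dd_monic (hN : 2 ≤ N) : (dd N).Monic :=
  monic_X_pow_add (sum_deg_lt N ℂ _ hN)

lemma dd_coeff (hN : 2 ≤ N) : (dd N).coeff (N - 2) = -(N : ℂ) := by
  rw [coeff_add, coeff_X_pow, if_neg (by omega), zero_add, finset_sum_coeff]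
  rw [Finset.sum_eq_single 1]
  · rw [coeff_C_mul, coeff_X_pow, if_pos (by omega), mul_one]
    have h1 : ((N : ℂ) - 1) ≠ 0 :=
      sub_ne_zero.mpr (by exact_mod_cast (show N ≠ 1 by omega))
    rw [Nat.choose_one_right, pow_one]
    push_cast [Nat.cast_sub (by omega : 1 ≤ N)]
    field_simp
  · intro s hs hne
    obtain ⟨hs1, hs2⟩ := Finset.mem_Icc.mp hs
    rw [coeff_C_mul, coeff_X_pow, if_neg (by omega), mul_zero]
  · intro h
    exact absurd (Finset.mem_Icc.mpr ⟨le_refl 1, by omega⟩) h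

lemma dd_natDegree (hN : 2 ≤ N) : (dd N).natDegree = N := by
  have : (dd N).degree = N := by
    rw [degree_add_eq_left_of_degree_lt]
    · exact degree_X_pow N
    · rw [degree_X_pow]; exact sum_deg_lt N ℂ _ hN
  exact natDegree_eq_of_degree_eq_some this

lemma dd_root (hN : 2 ≤ N) : ∃ r : ℂ, r ≠ 0 ∧ (dd N).eval r = 0 := by
  have hmon := dd_monic N hN
  have hne : dd N ≠ 0 := hmon.ne_zero
  by_contra hcon
  push_neg at hcon
  have hall : ∀ r ∈ (dd N).roots, r = 0 := by
    intro r hr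
    by_contra hr0
    exact hcon r hr0 ((mem_roots hne).mp hr)
  have hsplit : Multiset.card ((dd N).roots) = N := by
    have h := splits_iff_card_roots.mp (IsAlgClosed.splits (dd N))
    rwa [dd_natDegree N hN] at h
  have hrep : (dd N).roots = Multiset.replicate N 0 :=
    Multiset.eq_replicate.mpr ⟨hsplit, hall⟩
  have heq : dd N = X ^ N := by
    conv_lhs => rw [(IsAlgClosed.splits (dd N)).eq_prod_roots_of_monic hmon]
    rw [hrep, Multiset.map_replicate, Multiset.prod_replicate, map_zero, sub_zero]
  have := dd_coeff N hN
  rw [heq, coeff_X_pow, if_neg (by omega)] at this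
  have hN0 : (N : ℂ) ≠ 0 := Nat.cast_ne_zero.mpr (by omega)
  exact hN0 (by linear_combination this)

instance : CharZero F := charZero_of_injective_algebraMap (algebraMap ℂ F).injective

lemma PP_splits_K (hN : 2 ≤ N) : ((PP N).map (algebraMap F K)).Splits := by
  rw [key N hN]
  apply Splits.mul (Splits.C _)
  refine Splits.comp_of_degree_le_one (R := K) ?_ ?_
  · exact (IsAlgClosed.splits (dd N)).map ψ
  · calc (C vv⁻¹ * X : Polynomial K).degree ≤ (C vv⁻¹ : Polynomial K).degree + (X : Polynomial K).degree :=
          degree_mul_le _ _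
      _ ≤ 0 + 1 := add_le_add degree_C_le degree_X_le
      _ = 1 := by norm_num

lemma PP_not_splits (hN : 2 ≤ N) : ¬ (PP N).Splits := by
  intro hs
  obtain ⟨r, hr0, hr⟩ := dd_root N hN
  set x : K := vv * ψ r with hx
  have hroot : eval x ((PP N).map (algebraMap F K)) = 0 := by
    rw [key N hN, eval_mul, eval_C, eval_comp, eval_mul, eval_C, eval_X]
    have hinv : vv⁻¹ * x = ψ r := by
      rw [hx, ← mul_assoc, inv_mul_cancel₀ hvne, one_mul]
    rw [hinv, eval_map, eval₂_at_apply, hr, map_zero, mul_zero]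
  have hPprod := hs.eq_prod_roots_of_monic (PP_monic N hN)
  have hmapped : (PP N).map (algebraMap F K) =
      (((PP N).roots).map (fun a => X - C (algebraMap F K a))).prod := by
    conv_lhs => rw [hPprod]
    rw [Polynomial.map_multiset_prod, Multiset.map_map]
    simp [Function.comp_def]
  rw [hmapped, eval_multiset_prod] at hroot
  haveI : IsDomain K := inferInstance
  have h0 := Multiset.prod_eq_zero_iff.mp hroot
  rw [Multiset.mem_map] at h0
  obtain ⟨p, hp, hp0⟩ := h0
  rw [Multiset.mem_map] at hp
  obtain ⟨a, ha, rfl⟩ := hp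
  simp only [eval_sub, eval_X, eval_C] at hp0
  have hxa : x = algebraMap F K a := by linear_combination hp0
  have hc0 : (algebraMap ℂ F r) ≠ 0 := by
    simpa using hr0
  have hveq : vv = algebraMap F K (a / algebraMap ℂ F r) := by
    rw [map_div₀]
    rw [eq_div_iff (by simpa using hc0)]
    rw [← hxa, hx]
    rfl
  have : (a / algebraMap ℂ F r) ^ 2 = RatFunc.X := by
    apply (algebraMap F K).injective
    rw [map_pow, ← hveq, hv2]
  exact no_sqrt_X _ this

lemma finrank_SF (hN : 2 ≤ N) : Module.finrank F (PP N).SplittingField = 2 := by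
  have hfinK : FiniteDimensional F K := Module.Finite.of_basis (AdjoinRoot.powerBasis hq0).basis
  let lift : (PP N).SplittingField →ₐ[F] K := SplittingField.lift (PP N) (L := K) (PP_splits_K N hN)
  letI : Algebra (PP N).SplittingField K := lift.toRingHom.toAlgebra
  haveI : IsScalarTower F (PP N).SplittingField K :=
    IsScalarTower.of_algebraMap_eq fun x => (lift.commutes x).symm
  have htower := Module.finrank_mul_finrank F (PP N).SplittingField K
  rw [finrankK] at htower
  have hdvd : Module.finrank F (PP N).SplittingField ∣ 2 := ⟨_, htower.symm⟩
  have hne1 : Module.finrank F (PP N).SplittingField ≠ 1 := by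
    intro h1
    have hbot : (⊥ : Subalgebra F (PP N).SplittingField) = ⊤ :=
      Subalgebra.bot_eq_top_of_finrank_eq_one h1
    have hsurj : Function.Surjective (algebraMap F (PP N).SplittingField) := by
      intro y
      have : y ∈ (⊥ : Subalgebra F (PP N).SplittingField) := hbot ▸ trivial
      exact Algebra.mem_bot.mp this
    let e := RingEquiv.ofBijective (algebraMap F (PP N).SplittingField)
      ⟨(algebraMap F (PP N).SplittingField).injective, hsurj⟩
    have hsp : ((PP N).map ((e.symm : (PP N).SplittingField →+* F).comp
        (algebraMap F (PP N).SplittingField))).Splits := by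
      rw [← Polynomial.map_map]; exact (SplittingField.splits (PP N)).map _
    have hid : ((e.symm : (PP N).SplittingField →+* F).comp
        (algebraMap F (PP N).SplittingField)) = RingHom.id F := by
      ext t
      exact e.symm_apply_apply t
    rw [hid, Polynomial.map_id] at hsp
    exact PP_not_splits N hN hsp
  rcases (Nat.dvd_prime Nat.prime_two).mp hdvd with h | h
  · exact absurd h hne1
  · exact h


end

end Stmt7Aux

open Stmt7Aux

/-- The Galois group of the rank-one (confining phase) characteristic polynomial
`C(X) = X^N + ∑_{s=1}^{⌊N/2⌋} (-1)^s (N/(N-s)) C(N-s,s) u^s X^{N-2s}` over the rational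
function field `ℂ(u)` is cyclic of order two: `G_{|1)} = ℤ₂`. -/
theorem stmt7 (N : ℕ) (hN : 2 ≤ N)
    (P : Polynomial (RatFunc ℂ))
    (hP : P = X ^ N + ∑ s ∈ Finset.Icc 1 (N / 2),
        C ((-1 : RatFunc ℂ) ^ s * ((N : RatFunc ℂ) / ((N : RatFunc ℂ) - (s : RatFunc ℂ))) *
            (Nat.choose (N - s) s : RatFunc ℂ) * (RatFunc.X : RatFunc ℂ) ^ s) *
          X ^ (N - 2 * s)) :
    Nonempty (P.Gal ≃* Multiplicative (ZMod 2)) := by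
  have hPP : P = PP N := hP
  subst hPP
  haveI : IsGalois F (PP N).SplittingField := ⟨⟩
  have hcard : Nat.card (PP N).Gal = 2 := by
    have h := IsGalois.card_aut_eq_finrank F (PP N).SplittingField
    show Nat.card ((PP N).SplittingField ≃ₐ[F] (PP N).SplittingField) = 2
    rw [h]
    exact finrank_SF N hN
  haveI : Fact (Nat.Prime 2) := ⟨Nat.prime_two⟩
  have hcard2 : Nat.card (Multiplicative (ZMod 2)) = 2 := by
    simp [Nat.card_eq_fintype_card]
  exact ⟨mulEquivOfPrimeCardEq hcard hcard2⟩
end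

section
/- Let p, s, q ∈ ℂ with q ≠ 0. Then the degree-six polynomial (X³ + pX - s)² - 4q ∈ ℂ[X] has a repeated root in ℂ (equivalently, fails to be squarefree) if and only if (27s² + 4p³)² - 216·q·(27s² - 4p³) + 11664·q² = 0. -/
open Polynomial

/-- The sextic `(X³ + pX - s)² - 4q` (with `q ≠ 0`) has a repeated root in `ℂ` if and only if
`(27s² + 4p³)² - 216 q (27s² - 4p³) + 11664 q² = 0`. -/
theorem stmt8 (p s q : ℂ) (hq : q ≠ 0) :
    (∃ z : ℂ, (X - C z) ^ 2 ∣ (X ^ 3 + C p * X - C s) ^ 2 - C (4 * q)) ↔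
      (27 * s ^ 2 + 4 * p ^ 3) ^ 2 - 216 * q * (27 * s ^ 2 - 4 * p ^ 3) + 11664 * q ^ 2 = 0 := by
  set f : ℂ[X] := (X ^ 3 + C p * X - C s) ^ 2 - C (4 * q) with hf
  have hf0 : f ≠ 0 := by
    have : f.Monic := by rw [hf]; monicity!
    exact this.ne_zero
  have hderiv : ∀ z : ℂ, f.derivative.eval z = 2 * (z ^ 3 + p * z - s) * (3 * z ^ 2 + p) := by
    intro z
    simp [hf, derivative_pow]
  have hiff : ∀ z : ℂ, (X - C z) ^ 2 ∣ f ↔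
      ((z ^ 3 + p * z - s) ^ 2 - 4 * q = 0 ∧
       2 * (z ^ 3 + p * z - s) * (3 * z ^ 2 + p) = 0) := by
    intro z
    rw [← Polynomial.le_rootMultiplicity_iff hf0,
      show (2 ≤ rootMultiplicity z f) ↔ (1 < rootMultiplicity z f) from by omega,
      Polynomial.one_lt_rootMultiplicity_iff_isRoot hf0]
    have e1 : f.IsRoot z ↔ (z ^ 3 + p * z - s) ^ 2 - 4 * q = 0 := by
      simp [hf, IsRoot]
    have e2 : f.derivative.IsRoot z ↔ 2 * (z ^ 3 + p * z - s) * (3 * z ^ 2 + p) = 0 := by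
      rw [IsRoot, hderiv z]
    rw [e1, e2]
  constructor
  · rintro ⟨z, hz⟩
    rw [hiff z] at hz
    obtain ⟨h1, h2⟩ := hz
    have hne : z ^ 3 + p * z - s ≠ 0 := by
      intro h
      apply hq
      linear_combination (1/4 : ℂ) * (z ^ 3 + p * z - s) * h - (1/4 : ℂ) * h1
    have h3 : 3 * z ^ 2 + p = 0 := by
      rcases mul_eq_zero.1 h2 with h | h
      · rcases mul_eq_zero.1 h with h | h
        · norm_num at h
        · exact absurd h hne
      · exact h
    have hp : p = -3 * z ^ 2 := by linear_combination h3
    subst hp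
    linear_combination (729 * (2 * z ^ 3 - s) ^ 2 - 2916 * q) * h1
  · intro hT
    obtain ⟨r, hr⟩ := IsAlgClosed.exists_pow_nat_eq (-p / 3) (n := 2) (by norm_num)
    have hp : p = -3 * r ^ 2 := by field_simp at hr; linear_combination hr
    subst hp
    have key : ((-2 * r ^ 3 - s) ^ 2 - 4 * q) * ((2 * r ^ 3 - s) ^ 2 - 4 * q) = 0 := by
      linear_combination (1 / 729 : ℂ) * hT
    rcases mul_eq_zero.1 key with h | h
    · refine ⟨r, (hiff r).2 ⟨?_, ?_⟩⟩
      · linear_combination h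
      · ring
    · refine ⟨-r, (hiff (-r)).2 ⟨?_, ?_⟩⟩
      · linear_combination h
      · ring
end

section
/- Let p, s, q ∈ ℂ with q ≠ 0. Then there exists a monic squarefree polynomial M ∈ ℂ[X] of degree 2 such that M² divides (X³ + pX - s)² - 4q in ℂ[X] if and only if s = 0 and p³ + 27q = 0. -/
open Polynomial

lemma sq_factor (t : ℂ) : ((X:ℂ[X])^2 + C t)^2 * (X^2 + C (4*t)) =
    (X^3 + C (3*t) * X)^2 - C (4 * -(t^3)) := by
  simp only [C_mul, C_neg, C_pow, map_ofNat]
  ring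

lemma double_root (p s q γ : ℂ)
    (h : ((X:ℂ[X]) - C γ)^2 ∣ (X^3 + C p * X - C s)^2 - C (4*q)) :
    (γ^3 + p*γ - s)^2 = 4*q ∧ (γ^3 + p*γ - s) * (3*γ^2 + p) = 0 := by
  obtain ⟨k, hk⟩ := h
  have h1 := congrArg (eval γ) hk
  have h2 := congrArg (fun f => eval γ (derivative f)) hk
  simp [sub_self] at h1
  simp [derivative_pow, derivative_sub, derivative_add, derivative_mul, derivative_X_pow,
    sub_self] at h2
  constructor
  · linear_combination h1
  · exact mul_eq_zero.mpr h2

/-- The sextic `(X³ + pX - s)² - 4q` (with `q ≠ 0`) has two distinct double roots, i.e. is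
divisible by `M²` for some monic squarefree quadratic `M`, if and only if `s = 0` and
`p³ + 27q = 0`. -/
theorem stmt9 (p s q : ℂ) (hq : q ≠ 0) :
    (∃ M : Polynomial ℂ, M.Monic ∧ Squarefree M ∧ M.natDegree = 2 ∧
        M ^ 2 ∣ (X ^ 3 + C p * X - C s) ^ 2 - C (4 * q)) ↔
      s = 0 ∧ p ^ 3 + 27 * q = 0 := by
  constructor
  · rintro ⟨M, hM, hsf, hdeg, hdvd⟩
    -- get the two roots of M
    have hdegM : M.degree = 2 := by
      rw [degree_eq_natDegree hM.ne_zero, hdeg]; rfl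
    obtain ⟨α, hα⟩ := Complex.isAlgClosed.exists_root M (by rw [hdegM]; decide)
    obtain ⟨N, hN⟩ : (X - C α) ∣ M := dvd_iff_isRoot.mpr hα
    have hNm : N.Monic := (monic_X_sub_C α).of_mul_monic_left (hN ▸ hM)
    have hNd : N.natDegree = 1 := by
      have := hN ▸ hdeg
      rw [natDegree_mul (X_sub_C_ne_zero α) hNm.ne_zero, natDegree_X_sub_C] at this
      omega
    obtain hNe := hNm.eq_X_add_C hNd
    obtain ⟨β, hMfac⟩ : ∃ β, M = (X - C α) * (X - C β) :=
      ⟨-(N.coeff 0), by rw [map_neg, sub_neg_eq_add, ← hNe, ← hN]⟩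
    have hne : α ≠ β := by
      intro h
      apply not_isUnit_X_sub_C (R := ℂ) α
      exact hsf _ (by rw [hMfac, ← h])
    have hdα : ((X:ℂ[X]) - C α)^2 ∣ (X^3 + C p * X - C s)^2 - C (4*q) :=
      (pow_dvd_pow_of_dvd ⟨X - C β, hMfac⟩ 2).trans hdvd
    have hdβ : ((X:ℂ[X]) - C β)^2 ∣ (X^3 + C p * X - C s)^2 - C (4*q) :=
      (pow_dvd_pow_of_dvd ⟨X - C α, by rw [hMfac]; ring⟩ 2).trans hdvd
    obtain ⟨hA1, hA2⟩ := double_root p s q α hdα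
    obtain ⟨hB1, hB2⟩ := double_root p s q β hdβ
    have hAne : α^3 + p*α - s ≠ 0 := by
      intro h; apply hq; rw [h] at hA1; linear_combination (-1/4 : ℂ) * hA1
    have hBne : β^3 + p*β - s ≠ 0 := by
      intro h; apply hq; rw [h] at hB1; linear_combination (-1/4 : ℂ) * hB1
    have hpα : 3*α^2 + p = 0 := (mul_eq_zero.mp hA2).resolve_left hAne
    have hpβ : 3*β^2 + p = 0 := (mul_eq_zero.mp hB2).resolve_left hBne
    have hβα : β = -α := by
      have h3 : (α - β) * (α + β) = 0 := by linear_combination (1/3 : ℂ) * (hpα - hpβ)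
      rcases mul_eq_zero.mp h3 with h | h
      · exact absurd (sub_eq_zero.mp h) hne
      · linear_combination h
    have hα0 : α ≠ 0 := by
      intro h; exact hne (by rw [hβα, h, neg_zero])
    subst hβα
    have hs : s = 0 := by
      have hs8 : 8 * s * α^3 = 0 := by
        linear_combination hA1 - hB1 + 4*s*α*hpα
      simpa [hα0] using hs8
    refine ⟨hs, ?_⟩
    subst hs
    linear_combination (-(27:ℂ)/4) * hA1 + (p^2 + (15/4)*α^2*p + (9/4)*α^4) * hpα
  · rintro ⟨hs, hpq⟩
    have hp0 : p ≠ 0 := by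
      intro h; apply hq; rw [h] at hpq; linear_combination (1/27 : ℂ) * hpq
    have ht : p/3 ≠ 0 := div_ne_zero hp0 (by norm_num)
    refine ⟨X^2 + C (p/3), monic_X_pow_add_C _ two_ne_zero, ?_, natDegree_X_pow_add_C, ?_⟩
    · have hsep : ((X:ℂ[X])^2 - C (-(p/3))).Separable :=
        separable_X_pow_sub_C _ (by norm_num) (neg_ne_zero.mpr ht)
      rw [map_neg, sub_neg_eq_add] at hsep
      exact hsep.squarefree
    · refine ⟨X^2 + C (4*(p/3)), ?_⟩
      have h1 : (3:ℂ)*(p/3) = p := by ring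
      have h2 : (4:ℂ) * -((p/3)^3) = 4*q := by linear_combination (-4/27 : ℂ) * hpq
      have hsq := sq_factor (p/3)
      rw [h1, h2] at hsq
      rw [hs, map_zero, sub_zero]
      exact hsq.symm
end

section
/- Let z₁, z₂, z₃, z₄ ∈ ℂ and let c ∈ ℂ with c ≠ 0. Suppose that in ℂ[X] the identity (X + (z₁+z₂)/2)² (X - z₁)(X - z₂) + c = (X + (z₃+z₄)/2)² (X - z₃)(X - z₄) holds. Then (z₁ - z₂)² = 2(z₃ + z₄)(z₁ + z₂ + z₃ + z₄) and (z₃ - z₄)² = 2(z₁ + z₂)(z₁ + z₂ + z₃ + z₄). -/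
open Polynomial

/-- If two quartics, each with a double root at minus half the sum of their two simple
roots, differ by a nonzero constant `c`, then
`(z₁ - z₂)² = 2(z₃ + z₄)(z₁ + z₂ + z₃ + z₄)` and
`(z₃ - z₄)² = 2(z₁ + z₂)(z₁ + z₂ + z₃ + z₄)`. -/
theorem stmt13 (z₁ z₂ z₃ z₄ c : ℂ) (hc : c ≠ 0)
    (h : (X + C ((z₁ + z₂) / 2)) ^ 2 * (X - C z₁) * (X - C z₂) + C c =
         (X + C ((z₃ + z₄) / 2)) ^ 2 * (X - C z₃) * (X - C z₄)) :
    (z₁ - z₂) ^ 2 = 2 * (z₃ + z₄) * (z₁ + z₂ + z₃ + z₄) ∧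
    (z₃ - z₄) ^ 2 = 2 * (z₁ + z₂) * (z₁ + z₂ + z₃ + z₄) := by
  ring_nf at h
  simp only [show (2:ℂ[X]) = C 2 from (map_ofNat C 2).symm, ← C_mul, ← C_add, ← C_pow, ← C_neg,
    X_pow_mul, X_mul, mul_assoc] at h
  have h0 := congrArg (fun P => Polynomial.coeff P 0) h
  have h1 := congrArg (fun P => Polynomial.coeff P 1) h
  have h2 := congrArg (fun P => Polynomial.coeff P 2) h
  simp only [coeff_add, coeff_sub, coeff_neg, coeff_C_mul, coeff_X_pow, coeff_X, coeff_C] at h0 h1 h2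
  norm_num at h0 h1 h2
  by_cases hst : z₁ + z₂ = z₃ + z₄
  · exfalso
    apply hc
    have hp : z₁ * z₂ = z₃ * z₄ := by
      linear_combination h2 + (3/4*(z₁+z₂+z₃+z₄))*hst
    linear_combination h0 - (z₁+z₂)^2/4 * hp - (z₃*z₄*(z₁+z₂+z₃+z₄)/4) * hst
  · have key : (z₁ + z₂ - (z₃ + z₄)) *
        (z₁*z₂ - ((z₁+z₂)^2 - 2*(z₁+z₂)*(z₃+z₄) - 2*(z₃+z₄)^2)/4) = 0 := by
      linear_combination h1 - (z₃+z₄)*h2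
    have hp : z₁*z₂ = ((z₁+z₂)^2 - 2*(z₁+z₂)*(z₃+z₄) - 2*(z₃+z₄)^2)/4 := by
      rcases mul_eq_zero.mp key with h' | h'
      · exact absurd (sub_eq_zero.mp h') hst
      · linear_combination h'
    have hq : z₃*z₄ = ((z₃+z₄)^2 - 2*(z₁+z₂)*(z₃+z₄) - 2*(z₁+z₂)^2)/4 := by
      linear_combination hp - h2
    constructor
    · linear_combination -4*hp
    · linear_combination -4*hq
end

section
/- Let z₁, z₂, z₃, z₄, t ∈ ℂ with t ≠ 0, and suppose that in ℂ[X] the identity (X + (z₁+z₂)/2)² (X - z₁)(X - z₂) + 4t = (X + (z₃+z₄)/2)² (X - z₃)(X - z₄) holds. Define a = (z₁ + z₂ + z₃ + z₄)/2 and b = (z₁ + z₂)(z₃ + z₄)/4, and set C(X) = (X + (z₁+z₂)/2)² (X - z₁)(X - z₂) + 2t. Then C(X) = X⁴ + 2(b - a²)X² - 4abX + (a⁴ - 6a²b + 2b²)/2, and 16·t² = a²·(a² - 4b)³. -/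
open Polynomial

lemma expand4 (u v w : ℂ) :
    (X + C u) ^ 2 * (X - C v) * (X - C w) =
      X ^ 4 + C (2*u - v - w) * X ^ 3 + C (u^2 - 2*u*(v+w) + v*w) * X ^ 2 +
        C (2*u*v*w - u^2*(v+w)) * X + C (u^2*v*w) := by
  simp only [map_add, map_mul, map_sub, map_pow, map_ofNat, map_one]
  ring

/-- Forward direction of the rational parametrization of the variety `𝒩_{|2,1)}`: if
`C - 2t` and `C + 2t` each have a double root as indicated, then with
`a = (z₁+z₂+z₃+z₄)/2` and `b = (z₁+z₂)(z₃+z₄)/4` one has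
`C(X) = X⁴ + 2(b-a²)X² - 4abX + (a⁴-6a²b+2b²)/2` and `16 t² = a² (a²-4b)³`. -/
theorem stmt14 (z₁ z₂ z₃ z₄ t : ℂ) (ht : t ≠ 0)
    (h : (X + C ((z₁ + z₂) / 2)) ^ 2 * (X - C z₁) * (X - C z₂) + C (4 * t) =
         (X + C ((z₃ + z₄) / 2)) ^ 2 * (X - C z₃) * (X - C z₄))
    (a b : ℂ) (hab : a = (z₁ + z₂ + z₃ + z₄) / 2 ∧ b = (z₁ + z₂) * (z₃ + z₄) / 4)
    (Cpol : Polynomial ℂ)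
    (hC : Cpol = (X + C ((z₁ + z₂) / 2)) ^ 2 * (X - C z₁) * (X - C z₂) + C (2 * t)) :
    Cpol = X ^ 4 + C (2 * (b - a ^ 2)) * X ^ 2 - C (4 * a * b) * X +
        C ((a ^ 4 - 6 * a ^ 2 * b + 2 * b ^ 2) / 2) ∧
      16 * t ^ 2 = a ^ 2 * (a ^ 2 - 4 * b) ^ 3 := by
  obtain ⟨ha, hb⟩ := hab
  rw [expand4, expand4] at h
  have h0 := congrArg (fun P => Polynomial.coeff P 0) h
  have h1 := congrArg (fun P => Polynomial.coeff P 1) h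
  have h2 := congrArg (fun P => Polynomial.coeff P 2) h
  simp only [coeff_add, coeff_C_mul, coeff_X_pow, coeff_C, coeff_X] at h0 h1 h2
  norm_num at h0 h1 h2
  -- h0 : p²e/4 + 4t = q²f/4 ; h1 : pe - p³/4 = qf - q³/4 ; h2 : e - 3p²/4 = f - 3q²/4
  have hpq : (z₁ + z₂) - (z₃ + z₄) ≠ 0 := by
    intro heq
    have hz : z₄ = z₁ + z₂ - z₃ := by linear_combination -heq
    subst hz
    apply ht
    linear_combination (1/4 : ℂ) * h0 - ((z₁+z₂)^2/16) * h2
  have he : z₁ * z₂ =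
      ((z₁+z₂)^2 - 2*(z₁+z₂)*(z₃+z₄) - 2*(z₃+z₄)^2) / 4 := by
    have key : ((z₁+z₂) - (z₃+z₄)) * (z₁ * z₂) =
        ((z₁+z₂) - (z₃+z₄)) * (((z₁+z₂)^2 - 2*(z₁+z₂)*(z₃+z₄) - 2*(z₃+z₄)^2) / 4) := by
      linear_combination h1 - (z₃+z₄) * h2
    exact mul_left_cancel₀ hpq key
  have hf : z₃ * z₄ =
      ((z₃+z₄)^2 - 2*(z₁+z₂)*(z₃+z₄) - 2*(z₁+z₂)^2) / 4 := by
    have key : ((z₁+z₂) - (z₃+z₄)) * (z₃ * z₄) =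
        ((z₁+z₂) - (z₃+z₄)) * (((z₃+z₄)^2 - 2*(z₁+z₂)*(z₃+z₄) - 2*(z₁+z₂)^2) / 4) := by
      linear_combination h1 - (z₁+z₂) * h2
    exact mul_left_cancel₀ hpq key
  have hT : t = -((z₁+z₂)+(z₃+z₄)) * ((z₁+z₂)-(z₃+z₄))^3 / 64 := by
    linear_combination (1/4 : ℂ) * h0 - ((z₁+z₂)^2/16) * he + ((z₃+z₄)^2/16) * hf
  constructor
  · rw [hC, expand4]
    apply Polynomial.funext
    intro x
    simp only [eval_add, eval_sub, eval_mul, eval_pow, eval_C, eval_X]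
    subst ha hb
    linear_combination (x^2 + (z₁+z₂)*x + (z₁+z₂)^2/4) * he + 2 * hT
  · subst ha hb
    linear_combination (16*t - ((z₁+z₂)+(z₃+z₄)) * ((z₁+z₂)-(z₃+z₄))^3 / 4) * hT
end

section
/- For all natural numbers N and all r ≥ 1, the sum over all r-tuples (N₁, …, N_r) of natural numbers with N₁ + ⋯ + N_r = N of the product N₁·N₂⋯N_r equals the binomial coefficient binom(N + r - 1, 2r - 1). -/
open Finset

/-- Hockey stick: `∑_{k<M} C(k+d, c) = C(M+d, c+1)` when `d ≤ c`. -/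
lemma sumchoose (c d : ℕ) (hd : d ≤ c) :
    ∀ M, ∑ k ∈ range M, Nat.choose (k + d) c = Nat.choose (M + d) (c + 1) := by
  intro M
  induction M with
  | zero => simp [Nat.choose_eq_zero_of_lt (by omega : d < c + 1)]
  | succ M ih =>
      rw [sum_range_succ, ih, show M + 1 + d = (M + d) + 1 from by omega,
        Nat.choose_succ_succ' (M + d) c, Nat.add_comm]

lemma keyB (s : ℕ) :
    ∀ N, ∑ p ∈ Finset.HasAntidiagonal.antidiagonal N, p.1 * Nat.choose (p.2 + s) (2 * s + 1) =
      Nat.choose (N + s + 1) (2 * s + 3) := by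
  have hform : ∀ N, ∑ p ∈ Finset.HasAntidiagonal.antidiagonal N,
      p.1 * Nat.choose (p.2 + s) (2 * s + 1) =
      ∑ k ∈ range (N + 1), (N - k) * Nat.choose (k + s) (2 * s + 1) := by
    intro N
    rw [← Finset.HasAntidiagonal.map_swap_antidiagonal, Finset.sum_map]
    rw [Finset.Nat.sum_antidiagonal_eq_sum_range_succ_mk]
    rfl
  intro N
  induction N with
  | zero => simp [hform, Nat.choose_eq_zero_of_lt (by omega : s + 1 < 2 * s + 3)]
  | succ N ih =>
      rw [hform] at ih ⊢
      rw [sum_range_succ, Nat.sub_self, zero_mul, add_zero]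
      have : ∀ k ∈ range (N + 1), (N + 1 - k) * Nat.choose (k + s) (2 * s + 1) =
          (N - k) * Nat.choose (k + s) (2 * s + 1) + Nat.choose (k + s) (2 * s + 1) := by
        intro k hk
        rw [mem_range] at hk
        have : N + 1 - k = (N - k) + 1 := by omega
        rw [this, add_mul, one_mul]
      rw [Finset.sum_congr rfl this, Finset.sum_add_distrib, ih,
        sumchoose (2 * s + 1) s (by omega) (N + 1),
        show 2 * s + 1 + 1 = 2 * s + 2 from rfl,
        show N + 1 + s = N + s + 1 from by omega,
        show 2 * s + 3 = 2 * s + 2 + 1 from rfl,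
        Nat.choose_succ_succ' (N + s + 1) (2 * s + 2)]
      omega

/-- Decomposition of the sum over `(r+1)`-tuples. -/
lemma step (r N : ℕ) :
    ∑ t ∈ Finset.Nat.antidiagonalTuple (r + 1) N, ∏ i, t i =
      ∑ p ∈ Finset.HasAntidiagonal.antidiagonal N,
        p.1 * ∑ s ∈ Finset.Nat.antidiagonalTuple r p.2, ∏ i, s i := by
  simp_rw [Finset.mul_sum]
  rw [Finset.sum_sigma']
  refine Finset.sum_nbij' (i := fun t => ⟨(t 0, ∑ i, Fin.tail t i), Fin.tail t⟩)
    (j := fun x => Fin.cons x.1.1 x.2) ?_ ?_ ?_ ?_ ?_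
  · intro t ht
    rw [Finset.Nat.mem_antidiagonalTuple] at ht
    refine Finset.mem_sigma.2 ⟨?_, ?_⟩
    · rw [Finset.HasAntidiagonal.mem_antidiagonal]
      rw [← ht, Fin.sum_univ_succ]
      rfl
    · rw [Finset.Nat.mem_antidiagonalTuple]
  · intro x hx
    rw [Finset.mem_sigma, Finset.HasAntidiagonal.mem_antidiagonal, Finset.Nat.mem_antidiagonalTuple] at hx
    rw [Finset.Nat.mem_antidiagonalTuple, Fin.sum_cons, hx.2, hx.1]
  · intro t ht
    exact Fin.cons_self_tail t
  · intro x hx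
    rw [Finset.mem_sigma, Finset.HasAntidiagonal.mem_antidiagonal, Finset.Nat.mem_antidiagonalTuple] at hx
    simp [Fin.tail_cons, hx.2]
  · intro t ht
    rw [Fin.prod_univ_succ]
    rfl

/-- The number of rank-`r` vacua: the sum of `N₁ ⋯ N_r` over all `r`-tuples of natural
numbers with `N₁ + ⋯ + N_r = N` equals `binom(N + r - 1, 2r - 1)`. -/
theorem stmt19 (N r : ℕ) (hr : 1 ≤ r) :
    ∑ t ∈ Finset.Nat.antidiagonalTuple r N, ∏ i, t i =
      Nat.choose (N + r - 1) (2 * r - 1) := by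
  induction r generalizing N with
  | zero => omega
  | succ r ih =>
      rcases Nat.eq_zero_or_pos r with hr0 | hr1
      · subst hr0
        simp [Finset.Nat.antidiagonalTuple_one]
      · rw [step, Finset.sum_congr rfl (fun p hp => by rw [ih p.2 hr1])]
        obtain ⟨s, rfl⟩ : ∃ s, r = s + 1 := ⟨r - 1, by omega⟩
        simp only [show 2 * (s + 1) - 1 = 2 * s + 1 from by omega,
          show 2 * (s + 1 + 1) - 1 = 2 * s + 3 from by omega,
          show N + (s + 1 + 1) - 1 = N + s + 1 from by omega,
          show ∀ m : ℕ, m + (s + 1) - 1 = m + s from fun m => by omega]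
        exact keyB s N
end
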